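/- Let I be a set, u : I×I → ℂ, and C ≥ 0. Then u is a Schur multiplier of norm at most C if and only if for every finite subset F of I, the restriction of u to F×F is a Schur multiplier on ℓ²(F) of norm at most C. -/

import Mathlib

universe u

local notation "⟪" x ", " y "⟫" => @inner ℂ _ _ x y

/-- The standard orthonormal basis vector `δ i` of `ℓ²(I)`. -/
noncomputable def schurDelta {I : Type u} (i : I) : lp (fun _ : I => ℂ) 2 :=
  haveI := Classical.decEq I
  lp.single 2 i (1 : ℂ)

/-- `u : I × I → ℂ` is a Schur multiplier of norm at most `C`: for every bounded operator
`a` on `ℓ²(I)` there is a bounded operator `b` with matrix entries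
`⟨b δⱼ, δᵢ⟩ = u(i,j)·⟨a δⱼ, δᵢ⟩` and `‖b‖ ≤ C‖a‖`. -/
def IsSchurMul {I : Type u} (u : I × I → ℂ) (C : ℝ) : Prop :=
  ∀ a : lp (fun _ : I => ℂ) 2 →L[ℂ] lp (fun _ : I => ℂ) 2,
    ∃ b : lp (fun _ : I => ℂ) 2 →L[ℂ] lp (fun _ : I => ℂ) 2,
      ‖b‖ ≤ C * ‖a‖ ∧
      ∀ i j : I,
        ⟪schurDelta i, b (schurDelta j)⟫ = u (i, j) * ⟪schurDelta i, a (schurDelta j)⟫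

/-- The Schur multiplier norm of `u`: the least `C ≥ 0` such that `u` is a Schur
multiplier of norm at most `C`. -/
noncomputable def schurNorm {I : Type u} (u : I × I → ℂ) : ℝ :=
  sInf {C : ℝ | 0 ≤ C ∧ IsSchurMul u C}

open Filter Topology
open scoped ComplexConjugate

namespace SchurAux

abbrev HI (I : Type u) : Type u := lp (fun _ : I => ℂ) 2

variable {I : Type u}

lemma sd_apply_self (i : I) : (schurDelta i : ∀ _ : I, ℂ) i = 1 := by
  classical
  rw [schurDelta]; exact lp.single_apply_self 2 i 1

lemma sd_apply_ne {i j : I} (h : j ≠ i) : (schurDelta i : ∀ _ : I, ℂ) j = 0 := by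
  classical
  rw [schurDelta]; exact lp.single_apply_ne 2 i 1 h

lemma sd_apply [DecidableEq I] (i j : I) :
    (schurDelta i : ∀ _ : I, ℂ) j = if j = i then 1 else 0 := by
  by_cases h : j = i
  · subst h; simp [sd_apply_self]
  · simp [h, sd_apply_ne h]

lemma inner_sd_left (i : I) (f : HI I) : ⟪schurDelta i, f⟫ = f i := by
  classical
  rw [schurDelta]
  rw [lp.inner_single_left]
  simp [RCLike.inner_apply]

lemma inner_sd_right (i : I) (f : HI I) : ⟪f, schurDelta i⟫ = conj (f i) := by
  classical
  rw [schurDelta, lp.inner_single_right]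
  simp [RCLike.inner_apply]

lemma inner_eq_sum {J : Type u} [Fintype J] (f g : HI J) :
    ⟪f, g⟫ = ∑ j, conj (f j) * g j := by
  rw [lp.inner_eq_tsum, tsum_fintype]
  exact Finset.sum_congr rfl fun j _ => by rw [RCLike.inner_apply]; exact mul_comm _ _

lemma eq_sum_smul_sd {J : Type u} [Fintype J] (f : HI J) :
    f = ∑ j, f j • schurDelta j := by
  classical
  apply lp.ext
  funext k
  rw [lp.coeFn_sum, Finset.sum_apply]
  simp only [lp.coeFn_smul, Pi.smul_apply, sd_apply, smul_eq_mul]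
  simp [Finset.sum_ite_eq, mul_comm]

end SchurAux

namespace SchurAux

variable {I : Type u}

/-- underlying function of the embedding -/
noncomputable def elF (F : Finset I) (f : HI {x // x ∈ F}) : HI I :=
  haveI := Classical.decEq I
  ∑ k : {x // x ∈ F}, lp.single 2 (k : I) (f k)

lemma elF_coord_mem (F : Finset I) (f : HI {x // x ∈ F}) {j : I} (h : j ∈ F) :
    (elF F f : ∀ _ : I, ℂ) j = f ⟨j, h⟩ := by
  classical
  rw [elF, lp.coeFn_sum, Finset.sum_apply]
  rw [Finset.sum_eq_single (⟨j, h⟩ : {x // x ∈ F})]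
  · exact lp.single_apply_self _ _ _
  · intro b _ hb
    exact lp.single_apply_ne _ _ _ (fun hjb => hb (by ext; exact hjb.symm))
  · simp

lemma elF_coord_not (F : Finset I) (f : HI {x // x ∈ F}) {j : I} (h : j ∉ F) :
    (elF F f : ∀ _ : I, ℂ) j = 0 := by
  classical
  rw [elF, lp.coeFn_sum, Finset.sum_apply]
  refine Finset.sum_eq_zero fun k _ => ?_
  exact lp.single_apply_ne _ _ _ (fun hjk => h (hjk ▸ k.2))

/-- underlying function of the projection -/
noncomputable def plF (F : Finset I) (x : HI I) : HI {x // x ∈ F} :=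
  haveI := Classical.decEq I
  ∑ k : {x // x ∈ F}, lp.single 2 k (x (k : I))

lemma plF_coord (F : Finset I) (x : HI I) (k : {x // x ∈ F}) :
    (plF F x : ∀ _ : {x // x ∈ F}, ℂ) k = x (k : I) := by
  classical
  rw [plF, lp.coeFn_sum, Finset.sum_apply]
  rw [Finset.sum_eq_single k]
  · exact lp.single_apply_self _ _ _
  · intro b _ hb
    exact lp.single_apply_ne _ _ _ (Ne.symm hb).elim
  · simp

end SchurAux

namespace SchurAux

variable {I : Type u}

lemma inner_elF_left (F : Finset I) (f : HI {x // x ∈ F}) (z : HI I) :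
    ⟪elF F f, z⟫ = ∑ k : {x // x ∈ F}, conj (f k) * z (k : I) := by
  classical
  rw [elF, sum_inner]
  refine Finset.sum_congr rfl fun k _ => ?_
  rw [lp.inner_single_left]
  rw [RCLike.inner_apply]; exact mul_comm _ _

lemma inner_elF_right (F : Finset I) (f : HI {x // x ∈ F}) (z : HI I) :
    ⟪z, elF F f⟫ = ∑ k : {x // x ∈ F}, conj (z (k : I)) * f k := by
  classical
  rw [elF, inner_sum]
  refine Finset.sum_congr rfl fun k _ => ?_
  rw [lp.inner_single_right]
  rw [RCLike.inner_apply]; exact mul_comm _ _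

lemma inner_elF_elF (F : Finset I) (f g : HI {x // x ∈ F}) :
    ⟪elF F f, elF F g⟫ = ⟪f, g⟫ := by
  rw [inner_elF_left, inner_eq_sum]
  refine Finset.sum_congr rfl fun k _ => ?_
  rw [elF_coord_mem F g k.2]

lemma inner_plF_left (F : Finset I) (x : HI I) (v : HI {x // x ∈ F}) :
    ⟪plF F x, v⟫ = ⟪x, elF F v⟫ := by
  rw [inner_eq_sum, inner_elF_right]
  refine Finset.sum_congr rfl fun k _ => ?_
  rw [plF_coord]

lemma inner_plF_right (F : Finset I) (x : HI I) (v : HI {x // x ∈ F}) :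
    ⟪v, plF F x⟫ = ⟪elF F v, x⟫ := by
  rw [inner_eq_sum, inner_elF_left]
  refine Finset.sum_congr rfl fun k _ => ?_
  rw [plF_coord]

lemma norm_sq_eq_re_inner {J : Type u} (x : HI J) :
    ‖x‖ ^ 2 = RCLike.re (⟪x, x⟫) := (@inner_self_eq_norm_sq ℂ _ _ _ _ x).symm

lemma norm_elF (F : Finset I) (f : HI {x // x ∈ F}) : ‖elF F f‖ = ‖f‖ := by
  have h : ‖elF F f‖ ^ 2 = ‖f‖ ^ 2 := by
    rw [norm_sq_eq_re_inner, norm_sq_eq_re_inner, inner_elF_elF]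
  calc ‖elF F f‖ = Real.sqrt (‖elF F f‖ ^ 2) := (Real.sqrt_sq (norm_nonneg _)).symm
    _ = Real.sqrt (‖f‖ ^ 2) := by rw [h]
    _ = ‖f‖ := Real.sqrt_sq (norm_nonneg _)

lemma re_inner_self_coord (z : ℂ) : RCLike.re ((⟪z, z⟫ : ℂ)) = ‖z‖ ^ 2 := by
  rw [RCLike.inner_apply, RCLike.mul_conj]
  norm_cast

lemma norm_plF_le (F : Finset I) (x : HI I) : ‖plF F x‖ ≤ ‖x‖ := by
  have hsum : Summable fun i : I => ‖x i‖ ^ 2 := by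
    have := lp.summable_inner (𝕜 := ℂ) x x
    have h2 := (RCLike.reCLM (K := ℂ)).summable this
    exact h2.congr fun i => re_inner_self_coord (x i)
  have h : ‖plF F x‖ ^ 2 ≤ ‖x‖ ^ 2 := by
    rw [norm_sq_eq_re_inner, norm_sq_eq_re_inner, lp.inner_eq_tsum, lp.inner_eq_tsum,
      tsum_fintype, map_sum, RCLike.re_tsum ℂ (lp.summable_inner (𝕜 := ℂ) x x)]
    have h1 : ∀ k : {x // x ∈ F}, RCLike.re (⟪(plF F x) k, (plF F x) k⟫ : ℂ) = ‖x (k : I)‖ ^ 2 := by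
      intro k
      rw [re_inner_self_coord, plF_coord]
    rw [Finset.sum_congr rfl fun k _ => h1 k,
      tsum_congr fun i => re_inner_self_coord (x i),
      Finset.sum_coe_sort F (fun i => ‖x i‖ ^ 2)]
    exact hsum.sum_le_tsum F (fun i _ => sq_nonneg _)
  calc ‖plF F x‖ = Real.sqrt (‖plF F x‖ ^ 2) := (Real.sqrt_sq (norm_nonneg _)).symm
    _ ≤ Real.sqrt (‖x‖ ^ 2) := Real.sqrt_le_sqrt h
    _ = ‖x‖ := Real.sqrt_sq (norm_nonneg _)

end SchurAux

namespace SchurAux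

variable {I : Type u}

noncomputable def elL (F : Finset I) : HI {x // x ∈ F} →L[ℂ] HI I :=
  LinearMap.mkContinuous
    { toFun := elF F
      map_add' := by
        intro f g
        apply lp.ext; funext j
        by_cases h : j ∈ F
        · simp [lp.coeFn_add, elF_coord_mem _ _ h]
        · simp [lp.coeFn_add, elF_coord_not _ _ h]
      map_smul' := by
        intro c f
        apply lp.ext; funext j
        by_cases h : j ∈ F
        · simp [lp.coeFn_smul, elF_coord_mem _ _ h]
        · simp [lp.coeFn_smul, elF_coord_not _ _ h] }
    1 (fun f => by rw [one_mul]; exact le_of_eq (norm_elF F f))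

noncomputable def plL (F : Finset I) : HI I →L[ℂ] HI {x // x ∈ F} :=
  LinearMap.mkContinuous
    { toFun := plF F
      map_add' := by
        intro f g
        apply lp.ext; funext k
        simp [lp.coeFn_add, plF_coord]
      map_smul' := by
        intro c f
        apply lp.ext; funext k
        simp [lp.coeFn_smul, plF_coord] }
    1 (fun x => by rw [one_mul]; exact norm_plF_le F x)

@[simp] lemma elL_apply (F : Finset I) (f : HI {x // x ∈ F}) : elL F f = elF F f := rfl
@[simp] lemma plL_apply (F : Finset I) (x : HI I) : plL F x = plF F x := rfl

lemma norm_elL_le (F : Finset I) : ‖elL F‖ ≤ 1 :=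
  LinearMap.mkContinuous_norm_le _ zero_le_one _

lemma norm_plL_le (F : Finset I) : ‖plL F‖ ≤ 1 :=
  LinearMap.mkContinuous_norm_le _ zero_le_one _

lemma elF_sd (F : Finset I) (k : {x // x ∈ F}) : elF F (schurDelta k) = schurDelta (k : I) := by
  apply lp.ext; funext j
  by_cases h : j ∈ F
  · rw [elF_coord_mem _ _ h]
    by_cases hk : j = (k : I)
    · have : (⟨j, h⟩ : {x // x ∈ F}) = k := by ext; exact hk
      rw [this, sd_apply_self, hk, sd_apply_self]
    · have : (⟨j, h⟩ : {x // x ∈ F}) ≠ k := fun hc => hk (congrArg Subtype.val hc)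
      rw [sd_apply_ne this, sd_apply_ne hk]
  · rw [elF_coord_not _ _ h, sd_apply_ne (fun hc : j = (k : I) => h (hc ▸ k.2))]

lemma plF_sd (F : Finset I) (k : {x // x ∈ F}) : plF F (schurDelta (k : I)) = schurDelta k := by
  apply lp.ext; funext l
  rw [plF_coord]
  by_cases h : l = k
  · rw [h, sd_apply_self, sd_apply_self]
  · rw [sd_apply_ne (fun hc : (l : I) = (k : I) => h (by ext; exact hc)), sd_apply_ne h]

end SchurAux

namespace SchurAux

variable {I : Type u}

lemma norm_comp3_le {J : Type u} (p : HI I →L[ℂ] HI J) (b : HI I →L[ℂ] HI I)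
    (e : HI J →L[ℂ] HI I) (hp : ‖p‖ ≤ 1) (he : ‖e‖ ≤ 1) :
    ‖p.comp (b.comp e)‖ ≤ ‖b‖ := by
  have h1 := ContinuousLinearMap.opNorm_comp_le p (b.comp e)
  have h2 := ContinuousLinearMap.opNorm_comp_le b e
  have h3 : (0:ℝ) ≤ ‖b.comp e‖ := norm_nonneg _
  have h4 : (0:ℝ) ≤ ‖b‖ := norm_nonneg _
  have h5 : (0:ℝ) ≤ ‖e‖ := norm_nonneg _
  have h6 : (0:ℝ) ≤ ‖p‖ := norm_nonneg _
  nlinarith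

lemma norm_comp3_le' {J : Type u} (p : HI J →L[ℂ] HI I) (b : HI J →L[ℂ] HI J)
    (e : HI I →L[ℂ] HI J) (hp : ‖p‖ ≤ 1) (he : ‖e‖ ≤ 1) :
    ‖p.comp (b.comp e)‖ ≤ ‖b‖ := by
  have h1 := ContinuousLinearMap.opNorm_comp_le p (b.comp e)
  have h2 := ContinuousLinearMap.opNorm_comp_le b e
  have h3 : (0:ℝ) ≤ ‖b.comp e‖ := norm_nonneg _
  have h4 : (0:ℝ) ≤ ‖b‖ := norm_nonneg _
  have h5 : (0:ℝ) ≤ ‖e‖ := norm_nonneg _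
  have h6 : (0:ℝ) ≤ ‖p‖ := norm_nonneg _
  nlinarith

lemma forward_dir (u : I × I → ℂ) (C : ℝ) (hC : 0 ≤ C) (h : IsSchurMul u C) (F : Finset I) :
    IsSchurMul (fun p : {x // x ∈ F} × {x // x ∈ F} => u ((p.1 : I), (p.2 : I))) C := by
  intro a
  obtain ⟨b, hb, hbe⟩ := h ((elL F).comp (a.comp (plL F)))
  refine ⟨(plL F).comp (b.comp (elL F)), ?_, ?_⟩
  · have h1 : ‖(plL F).comp (b.comp (elL F))‖ ≤ ‖b‖ :=
      norm_comp3_le' (plL F) b (elL F) (norm_plL_le F) (norm_elL_le F)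
    have h2 : ‖(elL F).comp (a.comp (plL F))‖ ≤ ‖a‖ :=
      norm_comp3_le (elL F) a (plL F) (norm_elL_le F) (norm_plL_le F)
    calc ‖(plL F).comp (b.comp (elL F))‖ ≤ ‖b‖ := h1
      _ ≤ C * ‖(elL F).comp (a.comp (plL F))‖ := hb
      _ ≤ C * ‖a‖ := by exact mul_le_mul_of_nonneg_left h2 hC
  · intro i j
    have e1 : ((plL F).comp (b.comp (elL F))) (schurDelta j)
        = plF F (b (schurDelta (j : I))) := by
      simp [elF_sd]
    rw [e1, inner_plF_right, elF_sd, hbe]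
    congr 1
    have e2 : ((elL F).comp (a.comp (plL F))) (schurDelta (j : I))
        = elF F (a (schurDelta j)) := by
      simp [plF_sd]
    rw [e2, ← elF_sd F i, inner_elF_elF]

end SchurAux

namespace SchurAux

variable {I : Type u}

lemma inner_clm_eq_sum {J : Type u} [Fintype J] (T : HI J →L[ℂ] HI J) (v w : HI J) :
    ⟪v, T w⟫ = ∑ l, ∑ k, conj (v k) * (w l * ⟪schurDelta k, T (schurDelta l)⟫) := by
  conv_lhs => rw [eq_sum_smul_sd (f := w), eq_sum_smul_sd (f := v)]
  rw [map_sum, inner_sum]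
  refine Finset.sum_congr rfl fun l _ => ?_
  rw [map_smul, inner_smul_right, sum_inner, Finset.mul_sum]
  refine Finset.sum_congr rfl fun k _ => ?_
  rw [inner_smul_left]
  ring

/-- the truncated Schur-multiplied sesquilinear form -/
noncomputable def sform (u : I × I → ℂ) (a : HI I →L[ℂ] HI I) (F : Finset I)
    (x y : HI I) : ℂ :=
  ∑ l ∈ F, ∑ k ∈ F,
    conj (x k) * (y l * (u (k, l) * ⟪schurDelta k, a (schurDelta l)⟫))

end SchurAux

namespace SchurAux

variable {I : Type u}

lemma sform_eq_inner (u : I × I → ℂ) (a : HI I →L[ℂ] HI I) (F : Finset I)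
    (b : HI {x // x ∈ F} →L[ℂ] HI {x // x ∈ F})
    (hbe : ∀ i j : {x // x ∈ F},
      ⟪schurDelta i, b (schurDelta j)⟫ =
        u ((i : I), (j : I)) *
          ⟪schurDelta i, ((plL F).comp (a.comp (elL F))) (schurDelta j)⟫)
    (x y : HI I) :
    sform u a F x y = ⟪plF F x, b (plF F y)⟫ := by
  rw [inner_clm_eq_sum]
  have hent : ∀ k l : {x // x ∈ F},
      ⟪schurDelta k, ((plL F).comp (a.comp (elL F))) (schurDelta l)⟫ =
        ⟪schurDelta (k : I), a (schurDelta (l : I))⟫ := by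
    intro k l
    have : ((plL F).comp (a.comp (elL F))) (schurDelta l) = plF F (a (schurDelta (l : I))) := by
      simp [elF_sd]
    rw [this, inner_plF_right, elF_sd]
  have : ∀ l k : {x // x ∈ F},
      conj ((plF F x) k) * ((plF F y) l * ⟪schurDelta k, b (schurDelta l)⟫) =
      conj (x (k : I)) * (y (l : I) *
        (u ((k : I), (l : I)) * ⟪schurDelta (k : I), a (schurDelta (l : I))⟫)) := by
    intro l k
    rw [plF_coord, plF_coord, hbe, hent]
  rw [Finset.sum_congr rfl fun l _ => Finset.sum_congr rfl fun k _ => this l k]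
  rw [sform]
  rw [Finset.sum_coe_sort F (fun l => ∑ k : {x // x ∈ F},
    conj (x (k : I)) * (y l * (u ((k : I), l) * ⟪schurDelta (k : I), a (schurDelta l)⟫)))]
  exact Finset.sum_congr rfl fun l _ => (Finset.sum_coe_sort F (fun k =>
    conj (x k) * (y l * (u (k, l) * ⟪schurDelta k, a (schurDelta l)⟫)))).symm

lemma sform_bound (u : I × I → ℂ) (C : ℝ) (hC : 0 ≤ C)
    (h : ∀ F : Finset I,
      IsSchurMul (fun p : {x // x ∈ F} × {x // x ∈ F} => u ((p.1 : I), (p.2 : I))) C)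
    (a : HI I →L[ℂ] HI I) (F : Finset I) (x y : HI I) :
    ‖sform u a F x y‖ ≤ C * ‖a‖ * (‖x‖ * ‖y‖) := by
  obtain ⟨b, hb, hbe⟩ := h F ((plL F).comp (a.comp (elL F)))
  rw [sform_eq_inner u a F b hbe]
  have h1 : ‖⟪plF F x, b (plF F y)⟫‖ ≤ ‖plF F x‖ * (‖b‖ * ‖plF F y‖) := by
    calc ‖⟪plF F x, b (plF F y)⟫‖ ≤ ‖plF F x‖ * ‖b (plF F y)‖ := norm_inner_le_norm _ _
      _ ≤ ‖plF F x‖ * (‖b‖ * ‖plF F y‖) :=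
        mul_le_mul_of_nonneg_left (b.le_opNorm _) (norm_nonneg _)
  have h2 : ‖(plL F).comp (a.comp (elL F))‖ ≤ ‖a‖ :=
    norm_comp3_le (plL F) a (elL F) (norm_plL_le F) (norm_elL_le F)
  have h3 : ‖b‖ ≤ C * ‖a‖ := hb.trans (mul_le_mul_of_nonneg_left h2 hC)
  have h4 := norm_plF_le F x
  have h5 := norm_plF_le F y
  have n1 : (0:ℝ) ≤ ‖plF F x‖ := norm_nonneg _
  have n2 : (0:ℝ) ≤ ‖plF F y‖ := norm_nonneg _
  have n3 : (0:ℝ) ≤ ‖b‖ := norm_nonneg _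
  have n4 : (0:ℝ) ≤ ‖x‖ := norm_nonneg _
  have n5 : (0:ℝ) ≤ ‖y‖ := norm_nonneg _
  have n6 : (0:ℝ) ≤ C * ‖a‖ := mul_nonneg hC (norm_nonneg _)
  calc ‖⟪plF F x, b (plF F y)⟫‖ ≤ ‖plF F x‖ * (‖b‖ * ‖plF F y‖) := h1
    _ ≤ ‖x‖ * (C * ‖a‖ * ‖y‖) :=
      mul_le_mul h4 (mul_le_mul h3 h5 n2 n6) (mul_nonneg n3 n2) n4
    _ = C * ‖a‖ * (‖x‖ * ‖y‖) := by ring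

end SchurAux

namespace SchurAux

variable {I : Type u}

lemma Tt_coord_mem (F : Finset I) (x : HI I) {j : I} (h : j ∈ F) :
    (elF F (plF F x) : ∀ _ : I, ℂ) j = x j := by
  rw [elF_coord_mem _ _ h, plF_coord]

lemma Tt_coord_not (F : Finset I) (x : HI I) {j : I} (h : j ∉ F) :
    (elF F (plF F x) : ∀ _ : I, ℂ) j = 0 := elF_coord_not _ _ h

lemma norm_Tt_le (F : Finset I) (x : HI I) : ‖elF F (plF F x)‖ ≤ ‖x‖ := by
  rw [norm_elF]; exact norm_plF_le F x

lemma Tt_eq_sum [DecidableEq I] (F : Finset I) (x : HI I) :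
    ∑ i ∈ F, lp.single 2 i (x i) = elF F (plF F x) := by
  apply lp.ext; funext j
  rw [lp.coeFn_sum, Finset.sum_apply]
  by_cases h : j ∈ F
  · rw [Tt_coord_mem F x h, Finset.sum_eq_single j
      (fun b _ hb => by exact lp.single_apply_ne (E := fun _ : I => ℂ) 2 b (x b) (Ne.symm hb))
      (fun hj => absurd h hj)]
    exact lp.single_apply_self _ _ _
  · rw [Tt_coord_not F x h]
    exact Finset.sum_eq_zero fun i hi => by
      exact lp.single_apply_ne (E := fun _ : I => ℂ) 2 i (x i) (fun hji : j = i => h (hji ▸ hi))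

lemma tendsto_Tt (x : HI I) :
    Tendsto (fun F : Finset I => elF F (plF F x)) atTop (𝓝 x) := by
  classical
  have h : HasSum (fun i : I => lp.single 2 i (x i)) x :=
    lp.hasSum_single ENNReal.ofNat_ne_top x
  exact (h : Tendsto _ atTop (𝓝 x)).congr fun F => Tt_eq_sum F x

lemma sform_trunc (u : I × I → ℂ) (a : HI I →L[ℂ] HI I) {F G : Finset I} (hFG : F ⊆ G)
    (x y : HI I) :
    sform u a G (elF F (plF F x)) (elF F (plF F y)) = sform u a F x y := by
  rw [sform, sform]
  rw [← Finset.sum_subset hFG (fun l _ hl => Finset.sum_eq_zero fun k _ => by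
    rw [Tt_coord_not F y hl]; ring)]
  refine Finset.sum_congr rfl fun l hl => ?_
  rw [← Finset.sum_subset hFG (fun k _ hk => by rw [Tt_coord_not F x hk, map_zero]; ring)]
  refine Finset.sum_congr rfl fun k hk => ?_
  rw [Tt_coord_mem F x hk, Tt_coord_mem F y hl]

lemma sform_split (u : I × I → ℂ) (a : HI I →L[ℂ] HI I) (G : Finset I) (x x' y y' : HI I) :
    sform u a G x y =
      sform u a G (x - x') y + sform u a G x' (y - y') + sform u a G x' y' := by
  rw [sform, sform, sform, sform, ← Finset.sum_add_distrib, ← Finset.sum_add_distrib]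
  refine Finset.sum_congr rfl fun l _ => ?_
  rw [← Finset.sum_add_distrib, ← Finset.sum_add_distrib]
  refine Finset.sum_congr rfl fun k _ => ?_
  have hx : ((x - x' : HI I) : ∀ _ : I, ℂ) k = x k - x' k := by
    rw [lp.coeFn_sub]; rfl
  have hy : ((y - y' : HI I) : ∀ _ : I, ℂ) l = y l - y' l := by
    rw [lp.coeFn_sub]; rfl
  rw [hx, hy, map_sub]
  ring

lemma sform_add_left (u : I × I → ℂ) (a : HI I →L[ℂ] HI I) (F : Finset I) (x x' y : HI I) :
    sform u a F (x + x') y = sform u a F x y + sform u a F x' y := by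
  rw [sform, sform, sform, ← Finset.sum_add_distrib]
  refine Finset.sum_congr rfl fun l _ => ?_
  rw [← Finset.sum_add_distrib]
  refine Finset.sum_congr rfl fun k _ => ?_
  have hx : ((x + x' : HI I) : ∀ _ : I, ℂ) k = x k + x' k := by
    rw [lp.coeFn_add]; rfl
  rw [hx, map_add]
  ring

lemma sform_smul_left (u : I × I → ℂ) (a : HI I →L[ℂ] HI I) (F : Finset I) (c : ℂ)
    (x y : HI I) :
    sform u a F (c • x) y = conj c * sform u a F x y := by
  rw [sform, sform, Finset.mul_sum]
  refine Finset.sum_congr rfl fun l _ => ?_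
  rw [Finset.mul_sum]
  refine Finset.sum_congr rfl fun k _ => ?_
  have hx : ((c • x : HI I) : ∀ _ : I, ℂ) k = c * x k := by
    rw [lp.coeFn_smul]; rfl
  rw [hx, map_mul]
  ring

lemma sform_add_right (u : I × I → ℂ) (a : HI I →L[ℂ] HI I) (F : Finset I) (x y y' : HI I) :
    sform u a F x (y + y') = sform u a F x y + sform u a F x y' := by
  rw [sform, sform, sform, ← Finset.sum_add_distrib]
  refine Finset.sum_congr rfl fun l _ => ?_
  rw [← Finset.sum_add_distrib]
  refine Finset.sum_congr rfl fun k _ => ?_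
  have hy : ((y + y' : HI I) : ∀ _ : I, ℂ) l = y l + y' l := by
    rw [lp.coeFn_add]; rfl
  rw [hy]
  ring

lemma sform_smul_right (u : I × I → ℂ) (a : HI I →L[ℂ] HI I) (F : Finset I) (c : ℂ)
    (x y : HI I) :
    sform u a F x (c • y) = c * sform u a F x y := by
  rw [sform, sform, Finset.mul_sum]
  refine Finset.sum_congr rfl fun l _ => ?_
  rw [Finset.mul_sum]
  refine Finset.sum_congr rfl fun k _ => ?_
  have hy : ((c • y : HI I) : ∀ _ : I, ℂ) l = c * y l := by
    rw [lp.coeFn_smul]; rfl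
  rw [hy]
  ring

lemma sform_sd (u : I × I → ℂ) (a : HI I →L[ℂ] HI I) {F : Finset I} {i j : I}
    (hi : i ∈ F) (hj : j ∈ F) :
    sform u a F (schurDelta i) (schurDelta j) = u (i, j) * ⟪schurDelta i, a (schurDelta j)⟫ := by
  rw [sform]
  rw [Finset.sum_eq_single j (fun l _ hl => Finset.sum_eq_zero fun k _ => by
      rw [sd_apply_ne hl]; ring) (fun hj' => absurd hj hj')]
  rw [Finset.sum_eq_single i (fun k _ hk => by rw [sd_apply_ne hk, map_zero]; ring)
    (fun hi' => absurd hi hi')]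
  rw [sd_apply_self, sd_apply_self, map_one]
  ring

end SchurAux

namespace SchurAux

variable {I : Type u}

lemma sform_diff_bound (u : I × I → ℂ) (C : ℝ) (hC : 0 ≤ C)
    (h : ∀ F : Finset I,
      IsSchurMul (fun p : {x // x ∈ F} × {x // x ∈ F} => u ((p.1 : I), (p.2 : I))) C)
    (a : HI I →L[ℂ] HI I) {F G : Finset I} (hFG : F ⊆ G) (x y : HI I) :
    ‖sform u a G x y - sform u a F x y‖ ≤
      C * ‖a‖ * (‖x - elF F (plF F x)‖ * ‖y‖) + C * ‖a‖ * (‖x‖ * ‖y - elF F (plF F y)‖) := by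
  have hsplit := sform_split u a G x (elF F (plF F x)) y (elF F (plF F y))
  rw [sform_trunc u a hFG] at hsplit
  have hdiff : sform u a G x y - sform u a F x y =
      sform u a G (x - elF F (plF F x)) y +
        sform u a G (elF F (plF F x)) (y - elF F (plF F y)) := by
    rw [hsplit]; ring
  rw [hdiff]
  have h1 := sform_bound u C hC h a G (x - elF F (plF F x)) y
  have h2 := sform_bound u C hC h a G (elF F (plF F x)) (y - elF F (plF F y))
  have h3 : C * ‖a‖ * (‖elF F (plF F x)‖ * ‖y - elF F (plF F y)‖) ≤
      C * ‖a‖ * (‖x‖ * ‖y - elF F (plF F y)‖) := by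
    have := norm_Tt_le F x
    have n6 : (0:ℝ) ≤ C * ‖a‖ := mul_nonneg hC (norm_nonneg _)
    exact mul_le_mul_of_nonneg_left
      (mul_le_mul_of_nonneg_right (norm_Tt_le F x) (norm_nonneg _)) n6
  calc ‖sform u a G (x - elF F (plF F x)) y +
        sform u a G (elF F (plF F x)) (y - elF F (plF F y))‖
      ≤ ‖sform u a G (x - elF F (plF F x)) y‖ +
        ‖sform u a G (elF F (plF F x)) (y - elF F (plF F y))‖ := norm_add_le _ _
    _ ≤ C * ‖a‖ * (‖x - elF F (plF F x)‖ * ‖y‖) + C * ‖a‖ * (‖x‖ * ‖y - elF F (plF F y)‖) :=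
        add_le_add h1 (h2.trans h3)

lemma sform_cauchy (u : I × I → ℂ) (C : ℝ) (hC : 0 ≤ C)
    (h : ∀ F : Finset I,
      IsSchurMul (fun p : {x // x ∈ F} × {x // x ∈ F} => u ((p.1 : I), (p.2 : I))) C)
    (a : HI I →L[ℂ] HI I) (x y : HI I) :
    CauchySeq (fun F : Finset I => sform u a F x y) := by
  classical
  rw [Metric.cauchySeq_iff]
  intro ε hε
  set K : ℝ := C * ‖a‖ + 1 with hKdef
  have hKa0 : (0:ℝ) ≤ C * ‖a‖ := mul_nonneg hC (norm_nonneg _)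
  have hK : 0 < K := by rw [hKdef]; linarith
  have hKa : C * ‖a‖ ≤ K := by rw [hKdef]; linarith
  have hden : 0 < 4 * K * (‖x‖ + ‖y‖ + 1) := by
    have hx0 := norm_nonneg x
    have hy0 := norm_nonneg y
    nlinarith
  set δ : ℝ := ε / (4 * K * (‖x‖ + ‖y‖ + 1)) with hδdef
  have hδ : 0 < δ := div_pos hε hden
  obtain ⟨Nx, hNx⟩ := Metric.tendsto_atTop.mp (tendsto_Tt x) δ hδ
  obtain ⟨Ny, hNy⟩ := Metric.tendsto_atTop.mp (tendsto_Tt y) δ hδ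
  refine ⟨Nx ∪ Ny, fun m hm n hn => ?_⟩
  have key : ∀ F : Finset I, Nx ∪ Ny ≤ F →
      ‖sform u a (F ∪ (m ∪ n)) x y - sform u a F x y‖ ≤ K * δ * ‖y‖ + K * ‖x‖ * δ := by
    intro F hF
    have hsub : F ⊆ F ∪ (m ∪ n) := Finset.subset_union_left
    have hb := sform_diff_bound u C hC h a hsub x y
    have hx1 : ‖x - elF F (plF F x)‖ < δ := by
      rw [norm_sub_rev, ← dist_eq_norm]
      exact hNx F (le_trans le_sup_left hF)
    have hy1 : ‖y - elF F (plF F y)‖ < δ := by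
      rw [norm_sub_rev, ← dist_eq_norm]
      exact hNy F (le_trans le_sup_right hF)
    have t1 : C * ‖a‖ * (‖x - elF F (plF F x)‖ * ‖y‖) ≤ K * δ * ‖y‖ := by
      calc C * ‖a‖ * (‖x - elF F (plF F x)‖ * ‖y‖) ≤ K * (δ * ‖y‖) :=
            mul_le_mul hKa (mul_le_mul_of_nonneg_right hx1.le (norm_nonneg y))
              (mul_nonneg (norm_nonneg _) (norm_nonneg _)) hK.le
        _ = K * δ * ‖y‖ := by ring
    have t2 : C * ‖a‖ * (‖x‖ * ‖y - elF F (plF F y)‖) ≤ K * ‖x‖ * δ := by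
      calc C * ‖a‖ * (‖x‖ * ‖y - elF F (plF F y)‖) ≤ K * (‖x‖ * δ) :=
            mul_le_mul hKa (mul_le_mul_of_nonneg_left hy1.le (norm_nonneg x))
              (mul_nonneg (norm_nonneg _) (norm_nonneg _)) hK.le
        _ = K * ‖x‖ * δ := by ring
    exact hb.trans (add_le_add t1 t2)
  have hmu : m ∪ (m ∪ n) = n ∪ (m ∪ n) := by
    rw [Finset.union_comm m n]
    rw [← Finset.union_assoc, ← Finset.union_assoc]
    simp [Finset.union_comm]
  have hd : dist (sform u a m x y) (sform u a n x y) ≤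
      2 * (K * δ * ‖y‖ + K * ‖x‖ * δ) := by
    rw [dist_eq_norm]
    have e1 := key m hm
    have e2 := key n hn
    rw [hmu] at e1
    calc ‖sform u a m x y - sform u a n x y‖
        = ‖(sform u a (n ∪ (m ∪ n)) x y - sform u a n x y) -
            (sform u a (n ∪ (m ∪ n)) x y - sform u a m x y)‖ := by ring_nf
      _ ≤ ‖sform u a (n ∪ (m ∪ n)) x y - sform u a n x y‖ +
          ‖sform u a (n ∪ (m ∪ n)) x y - sform u a m x y‖ := norm_sub_le _ _
      _ ≤ 2 * (K * δ * ‖y‖ + K * ‖x‖ * δ) := by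
        have := add_le_add e2 e1
        linarith
  refine lt_of_le_of_lt hd ?_
  have hδeq : δ * (4 * K * (‖x‖ + ‖y‖ + 1)) = ε := by
    rw [hδdef]
    field_simp
  nlinarith [norm_nonneg x, norm_nonneg y, hδ, hK]

end SchurAux

namespace SchurAux

variable {I : Type u}

lemma backward_dir (u : I × I → ℂ) (C : ℝ) (hC : 0 ≤ C)
    (h : ∀ F : Finset I,
      IsSchurMul (fun p : {x // x ∈ F} × {x // x ∈ F} => u ((p.1 : I), (p.2 : I))) C) :
    IsSchurMul u C := by
  classical
  intro a
  have hconv : ∀ x y : HI I,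
      ∃ z : ℂ, Tendsto (fun F : Finset I => sform u a F x y) atTop (𝓝 z) :=
    fun x y => cauchySeq_tendsto_of_complete (sform_cauchy u C hC h a x y)
  choose L hL using hconv
  have hLb : ∀ x y, ‖L x y‖ ≤ C * ‖a‖ * (‖x‖ * ‖y‖) := fun x y =>
    le_of_tendsto (hL x y).norm
      (Filter.Eventually.of_forall fun F => sform_bound u C hC h a F x y)
  have haddr : ∀ x y y', L x (y + y') = L x y + L x y' := fun x y y' =>
    tendsto_nhds_unique (hL x (y + y'))
      (((hL x y).add (hL x y')).congr fun F => (sform_add_right u a F x y y').symm)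
  have hsmulr : ∀ (c : ℂ) x y, L x (c • y) = c * L x y := fun c x y =>
    tendsto_nhds_unique (hL x (c • y))
      (((hL x y).const_mul c).congr fun F => (sform_smul_right u a F c x y).symm)
  have haddl : ∀ x x' y, L (x + x') y = L x y + L x' y := fun x x' y =>
    tendsto_nhds_unique (hL (x + x') y)
      (((hL x y).add (hL x' y)).congr fun F => (sform_add_left u a F x x' y).symm)
  have hsmull : ∀ (c : ℂ) x y, L (c • x) y = conj c * L x y := fun c x y =>
    tendsto_nhds_unique (hL (c • x) y)
      (((hL x y).const_mul (conj c)).congr fun F => (sform_smul_left u a F c x y).symm)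
  have hentry : ∀ i j : I,
      L (schurDelta i) (schurDelta j) = u (i, j) * ⟪schurDelta i, a (schurDelta j)⟫ := by
    intro i j
    refine tendsto_nhds_unique (hL _ _) ?_
    have hev : ∀ᶠ F in (atTop : Filter (Finset I)),
        sform u a F (schurDelta i) (schurDelta j) =
          u (i, j) * ⟪schurDelta i, a (schurDelta j)⟫ :=
      Filter.eventually_atTop.2 ⟨{i, j}, fun F hF =>
        sform_sd u a (hF (by simp)) (hF (by simp))⟩
    exact Filter.Tendsto.congr' (hev.mono fun F hF => hF.symm) tendsto_const_nhds
  let M : HI I →L⋆[ℂ] HI I →L[ℂ] ℂ :=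
    LinearMap.mkContinuous₂
      (LinearMap.mk₂'ₛₗ (starRingEnd ℂ) (RingHom.id ℂ) (fun v w => conj (L w v))
        (fun v v' w => by rw [haddr, map_add])
        (fun c v w => by rw [hsmulr, map_mul]; rfl)
        (fun v w w' => by rw [haddl, map_add])
        (fun c v w => by rw [hsmull, map_mul, Complex.conj_conj]; rfl))
      (C * ‖a‖)
      (fun v w => by
        calc ‖conj (L w v)‖ = ‖L w v‖ := RCLike.norm_conj _
          _ ≤ C * ‖a‖ * (‖w‖ * ‖v‖) := hLb w v
          _ = C * ‖a‖ * ‖v‖ * ‖w‖ := by ring)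
  let b : HI I →L[ℂ] HI I := InnerProductSpace.continuousLinearMapOfBilin M
  have hbM : ∀ v w : HI I, ⟪b v, w⟫ = M v w := fun v w =>
    InnerProductSpace.continuousLinearMapOfBilin_apply M v w
  have hbL : ∀ x y : HI I, ⟪x, b y⟫ = L x y := by
    intro x y
    have h1 : ⟪b y, x⟫ = conj (L x y) := hbM y x
    calc ⟪x, b y⟫ = conj ⟪b y, x⟫ := by rw [inner_conj_symm]
      _ = conj (conj (L x y)) := by rw [h1]
      _ = L x y := Complex.conj_conj _
  refine ⟨b, ?_, ?_⟩
  · refine ContinuousLinearMap.opNorm_le_bound _ (mul_nonneg hC (norm_nonneg a)) fun y => ?_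
    by_cases hy : ‖b y‖ = 0
    · rw [hy]
      exact mul_nonneg (mul_nonneg hC (norm_nonneg a)) (norm_nonneg y)
    · have hpos : 0 < ‖b y‖ := lt_of_le_of_ne (norm_nonneg _) (Ne.symm hy)
      have h2 : ‖b y‖ * ‖b y‖ = ‖L (b y) y‖ := by
        rw [← hbL (b y) y, @inner_self_eq_norm_sq_to_K ℂ]
        rw [norm_pow, RCLike.norm_ofReal, abs_norm]
        ring
      have h3 : ‖L (b y) y‖ ≤ C * ‖a‖ * (‖b y‖ * ‖y‖) := hLb (b y) y
      have h4 : ‖b y‖ * ‖b y‖ ≤ (C * ‖a‖ * ‖y‖) * ‖b y‖ := by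
        rw [h2]
        calc ‖L (b y) y‖ ≤ C * ‖a‖ * (‖b y‖ * ‖y‖) := h3
          _ = (C * ‖a‖ * ‖y‖) * ‖b y‖ := by ring
      exact le_of_mul_le_mul_right h4 hpos
  · intro i j
    rw [hbL, hentry]

end SchurAux

/-- `u : I × I → ℂ` is a Schur multiplier of norm at most `C` iff for
every finite subset `F` of `I` the restriction of `u` to `F × F` is a Schur multiplier
on `ℓ²(F)` of norm at most `C`. -/
theorem isSchurMul_iff_finite_restrictions {I : Type u} (u : I × I → ℂ) (C : ℝ)
    (hC : 0 ≤ C) :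
    IsSchurMul u C ↔
      ∀ F : Finset I,
        IsSchurMul (fun p : {x // x ∈ F} × {x // x ∈ F} => u ((p.1 : I), (p.2 : I))) C := by
  constructor
  · intro h F
    exact SchurAux.forward_dir u C hC h F
  · intro h
    exact SchurAux.backward_dir u C hC h
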